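/- For real t with 0 < t < 3/(4·4^{1/3}) (so that the series below converges), the unique real root x(t) of x⁴ - x + t = 0 that tends to 0 as t → 0 is given by the convergent series x(t) = t · ∑_{k≥0} ((1/4)_k (1/2)_k (3/4)_k / ((2/3)_k (4/3)_k k!)) · (4 (4t/3)³)^k, i.e. x(t) = t · ₃F₂(1/4, 1/2, 3/4; 2/3, 4/3; 4(4t/3)³). -/

import Mathlib

open scoped BigOperators

/-- Generalized ballot / Fuss–Catalan numbers `fcA n r`, satisfying
`B(z)^r = ∑ fcA n r zⁿ` where `B = 1 + z B⁴`. -/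
def fcA : ℕ → ℕ → ℕ
  | 0, _ => 1
  | _+1, 0 => 0
  | n+1, r+1 => fcA (n+1) r + fcA n (r+4)
  termination_by n r => (n, r)

@[simp] lemma fcA_zero (r : ℕ) : fcA 0 r = 1 := by cases r <;> rw [fcA]
@[simp] lemma fcA_succ_zero (n : ℕ) : fcA (n+1) 0 = 0 := by rw [fcA]
lemma fcA_succ_succ (n r : ℕ) : fcA (n+1) (r+1) = fcA (n+1) r + fcA n (r+4) := by rw [fcA]
lemma fcA_succ_one (n : ℕ) : fcA (n+1) 1 = fcA n 4 := by
  rw [fcA_succ_succ, fcA_succ_zero, Nat.zero_add]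

/-- Vandermonde-type convolution for the numbers `fcA`. -/
theorem fcA_conv : ∀ (n s r : ℕ),
    (∑ i ∈ Finset.range (n+1), fcA i r * fcA (n-i) s) = fcA n (r+s)
  | n, 0, r => by
    rw [Finset.sum_eq_single n]
    · simp
    · intro i hi hne
      have h : n - i ≠ 0 := by
        have := Finset.mem_range.mp hi; omega
      obtain ⟨m, hm⟩ := Nat.exists_eq_succ_of_ne_zero h
      rw [hm, fcA_succ_zero, Nat.mul_zero]
    · intro h; exact absurd (Finset.self_mem_range_succ n) h
  | 0, s+1, r => by simp
  | n+1, s+1, r => by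
    have key : ∀ i ∈ Finset.range (n+1), fcA i r * fcA (n+1-i) (s+1)
        = fcA i r * fcA (n+1-i) s + fcA i r * fcA (n-i) (s+4) := by
      intro i hi
      have hle : i ≤ n := Nat.lt_succ_iff.mp (Finset.mem_range.mp hi)
      have h1 : n + 1 - i = (n - i) + 1 := by omega
      rw [h1, fcA_succ_succ, Nat.mul_add]
    have e1 : (∑ i ∈ Finset.range (n+1), fcA i r * fcA (n+1-i) s) + fcA (n+1) r
        = fcA (n+1) (r+s) := by
      have := fcA_conv (n+1) s r
      rwa [Finset.sum_range_succ, Nat.sub_self, fcA_zero, Nat.mul_one] at this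
    have e2 : (∑ i ∈ Finset.range (n+1), fcA i r * fcA (n-i) (s+4)) = fcA n (r+(s+4)) :=
      fcA_conv n (s+4) r
    rw [Finset.sum_range_succ, Finset.sum_congr rfl key, Finset.sum_add_distrib,
      Nat.sub_self, fcA_zero, Nat.mul_one, e2,
      show r + (s+1) = (r+s)+1 from by omega, fcA_succ_succ,
      show r + s + 4 = r + (s+4) from by omega]
    omega
  termination_by n s r => (n, s)

/-- Closed form: `fcA n (m+1) = (m+1) (4n+m)! / (n! (3n+m+1)!)`. -/
theorem fcA_closed : ∀ n m : ℕ, (fcA n (m+1) : ℝ) * (Nat.factorial n : ℝ) *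
      (Nat.factorial (3*n+m+1) : ℝ) = (m+1) * (Nat.factorial (4*n+m) : ℝ)
  | 0, m => by simp [Nat.factorial_succ]
  | n+1, 0 => by
    have I : (fcA n 4 : ℝ) * (Nat.factorial n : ℝ) * (Nat.factorial (3*n+3+1) : ℝ)
        = (3+1) * (Nat.factorial (4*n+3) : ℝ) := by
      have := fcA_closed n 3; push_cast at this ⊢; linarith [this]
    rw [fcA_succ_one]
    rw [show 3*(n+1)+0+1 = 3*n+3+1 from by ring, show 4*(n+1)+0 = (4*n+3)+1 from by ring]
    rw [show Nat.factorial ((4*n+3)+1) = (4*n+3+1) * Nat.factorial (4*n+3) from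
      Nat.factorial_succ _]
    rw [show Nat.factorial (n+1) = (n+1) * Nat.factorial n from Nat.factorial_succ _]
    push_cast
    push_cast at I
    linear_combination ((n : ℝ)+1) * I
  | n+1, m+1 => by
    have I1 : (fcA (n+1) (m+1) : ℝ) * (((n:ℝ)+1) * (Nat.factorial n : ℝ)) *
        (Nat.factorial (3*n+m+4) : ℝ) = ((m:ℝ)+1) * (Nat.factorial (4*n+m+4) : ℝ) := by
      have := fcA_closed (n+1) m
      rw [show 3*(n+1)+m+1 = 3*n+m+4 from by ring, show 4*(n+1)+m = 4*n+m+4 from by ring,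
        show Nat.factorial (n+1) = (n+1) * Nat.factorial n from Nat.factorial_succ _] at this
      push_cast at this ⊢; linarith [this]
    have I2 : (fcA n (m+5) : ℝ) * (Nat.factorial n : ℝ) *
        (((3*n+m+4 : ℕ) + 1 : ℝ) * (Nat.factorial (3*n+m+4) : ℝ))
        = ((m:ℝ)+5) * (Nat.factorial (4*n+m+4) : ℝ) := by
      have := fcA_closed n (m+4)
      rw [show 3*n+(m+4)+1 = (3*n+m+4)+1 from by ring, show 4*n+(m+4) = 4*n+m+4 from by ring,
        show Nat.factorial ((3*n+m+4)+1) = (3*n+m+4+1) * Nat.factorial (3*n+m+4) from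
          Nat.factorial_succ _, show m+4+1 = m+5 from rfl] at this
      push_cast at this ⊢; linarith [this]
    rw [fcA_succ_succ]
    rw [show 3*(n+1)+(m+1)+1 = (3*n+m+4)+1 from by ring,
      show 4*(n+1)+(m+1) = (4*n+m+4)+1 from by ring]
    rw [show Nat.factorial ((3*n+m+4)+1) = (3*n+m+4+1) * Nat.factorial (3*n+m+4) from
      Nat.factorial_succ _,
      show Nat.factorial ((4*n+m+4)+1) = (4*n+m+4+1) * Nat.factorial (4*n+m+4) from
      Nat.factorial_succ _,
      show Nat.factorial (n+1) = (n+1) * Nat.factorial n from Nat.factorial_succ _,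
      show m+1+4 = m+5 from rfl]
    push_cast at I1 I2 ⊢
    linear_combination (3*(n:ℝ)+(m:ℝ)+5) * I1 + ((n:ℝ)+1) * I2
  termination_by n m => (n, m)

/-- Ratio of consecutive Fuss–Catalan numbers. -/
lemma fcA_ratio (k : ℕ) : (fcA (k+1) 1 : ℝ) * (((k:ℝ)+1)*(3*k+2)*(3*k+3)*(3*k+4))
    = (fcA k 1 : ℝ) * ((4*(k:ℝ)+1)*(4*k+2)*(4*k+3)*(4*k+4)) := by
  have h1 := fcA_closed k 0
  have h2 := fcA_closed (k+1) 0
  rw [show 3*(k+1)+0+1 = ((((3*k+0+1)+1)+1)+1) from by ring,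
    show 4*(k+1)+0 = ((((4*k+0)+1)+1)+1)+1 from by ring,
    Nat.factorial_succ ((((3*k+0+1)+1)+1)), Nat.factorial_succ (((3*k+0+1)+1)),
    Nat.factorial_succ ((3*k+0+1)),
    Nat.factorial_succ ((((4*k+0)+1)+1)+1), Nat.factorial_succ (((4*k+0)+1)+1),
    Nat.factorial_succ ((4*k+0)+1), Nat.factorial_succ (4*k+0),
    Nat.factorial_succ k] at h2
  have hfac : (0:ℝ) < (Nat.factorial k : ℝ) * (Nat.factorial (3*k+0+1) : ℝ) := by
    positivity
  apply mul_right_cancel₀ hfac.ne'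
  push_cast at h1 h2 ⊢
  linear_combination h2 - ((4*(k:ℝ)+1)*(4*k+2)*(4*k+3)*(4*k+4)) * h1

/-- Pochhammer symbol `(a)_k` on `ℝ`. -/
noncomputable def pochR (a : ℝ) (k : ℕ) : ℝ := ∏ i ∈ Finset.range k, (a + i)

/-- Terms of the hypergeometric series `₃F₂(1/4,1/2,3/4; 2/3,4/3; 4(4t/3)³)` giving the
small root of `x⁴ - x + t = 0`. -/
noncomputable def quarticTerm (t : ℝ) (k : ℕ) : ℝ :=
  pochR (1/4) k * pochR (1/2) k * pochR (3/4) k /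
    (pochR (2/3) k * pochR (4/3) k * (k.factorial : ℝ)) * (4 * (4 * t / 3) ^ 3) ^ k

lemma pochR_pos {a : ℝ} (ha : 0 < a) (k : ℕ) : 0 < pochR a k :=
  Finset.prod_pos (fun i _ => by positivity)

lemma pochR_succ (a : ℝ) (k : ℕ) : pochR a (k+1) = pochR a k * (a + k) :=
  Finset.prod_range_succ _ _

lemma fcA_ratio' (k : ℕ) : (fcA (k+1) 1 : ℝ) * ((2/3+(k:ℝ))*(4/3+k)*((k:ℝ)+1)) * 27
    = (fcA k 1 : ℝ) * ((1/4+(k:ℝ))*(1/2+k)*(3/4+k)) * 256 := by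
  have h := fcA_ratio k
  have hk : ((k:ℝ)+1) ≠ 0 := by positivity
  apply mul_right_cancel₀ hk
  nlinarith [h]

/-- The hypergeometric term is the Fuss–Catalan number times `(t³)ᵏ`. -/
lemma quarticTerm_eq (t : ℝ) (k : ℕ) : quarticTerm t k = (fcA k 1 : ℝ) * (t^3)^k := by
  induction k with
  | zero => simp [quarticTerm, pochR]
  | succ k IH =>
    have hQ1 := pochR_pos (by norm_num : (0:ℝ) < 2/3) k
    have hQ2 := pochR_pos (by norm_num : (0:ℝ) < 4/3) k
    have hfac : (0:ℝ) < (Nat.factorial k : ℝ) := by positivity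
    have hb1 : (0:ℝ) < 2/3 + (k:ℝ) := by positivity
    have hb2 : (0:ℝ) < 4/3 + (k:ℝ) := by positivity
    have hk1 : (0:ℝ) < (k:ℝ)+1 := by positivity
    have step : quarticTerm t (k+1) * ((2/3+(k:ℝ))*(4/3+(k:ℝ))*((k:ℝ)+1))
        = quarticTerm t k * ((1/4+(k:ℝ))*(1/2+(k:ℝ))*(3/4+(k:ℝ))) * (4*(4*t/3)^3) := by
      rw [quarticTerm, quarticTerm, pochR_succ, pochR_succ, pochR_succ, pochR_succ,
        pochR_succ, Nat.factorial_succ, pow_succ]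
      push_cast
      field_simp
    apply mul_right_cancel₀ (by positivity : ((2/3+(k:ℝ))*(4/3+(k:ℝ))*((k:ℝ)+1)) ≠ 0)
    rw [step, IH]
    have h := fcA_ratio' k
    linear_combination (-(t^3)^k * t^3 / 27) * h

/-- Geometric bound for the Fuss–Catalan numbers. -/
lemma fcA_le (n : ℕ) : (fcA n 1 : ℝ) ≤ (256/27)^n := by
  induction n with
  | zero => simp
  | succ n IH =>
    have h := fcA_ratio n
    have hD : (0:ℝ) < ((n:ℝ)+1)*(3*n+2)*(3*n+3)*(3*n+4) := by positivity
    have hnn : (0:ℝ) ≤ (fcA n 1 : ℝ) := Nat.cast_nonneg _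
    have key : (fcA (n+1) 1 : ℝ) ≤ (256/27) * (fcA n 1 : ℝ) := by
      rw [← mul_le_mul_iff_of_pos_right hD, h]
      have hn : (0:ℝ) ≤ (n:ℝ) := Nat.cast_nonneg _
      nlinarith [mul_nonneg hnn (mul_nonneg (mul_nonneg hn hn) hn),
        mul_nonneg hnn (mul_nonneg hn hn), mul_nonneg hnn hn, hnn]
    calc (fcA (n+1) 1 : ℝ) ≤ (256/27) * (fcA n 1 : ℝ) := key
      _ ≤ (256/27) * (256/27)^n := by nlinarith [IH]
      _ = (256/27)^(n+1) := by ring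

/-- Coefficient sequence of `B(u)^r` where `B` is the Fuss–Catalan generating function. -/
noncomputable def fcB (u : ℝ) (r n : ℕ) : ℝ := (fcA n r : ℝ) * u^n

lemma summable_fcB1 {u : ℝ} (hu0 : 0 < u) (hu1 : u < 27/256) : Summable (fcB u 1) := by
  have hq0 : (0:ℝ) ≤ 256/27 * u := by positivity
  have hq1 : 256/27 * u < 1 := by nlinarith
  refine Summable.of_nonneg_of_le (fun n => by
      have : (0:ℝ) ≤ u^n := by positivity
      exact mul_nonneg (Nat.cast_nonneg _) this) (fun n => ?_)
    (summable_geometric_of_lt_one hq0 hq1)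
  have : (256/27 * u)^n = (256/27:ℝ)^n * u^n := by rw [mul_pow]
  rw [this]
  exact mul_le_mul_of_nonneg_right (fcA_le n) (by positivity)

lemma fcB_conv {u : ℝ} (r s : ℕ) (n : ℕ) :
    ∑ i ∈ Finset.range (n+1), fcB u r i * fcB u s (n-i) = fcB u (r+s) n := by
  have : ∀ i ∈ Finset.range (n+1), fcB u r i * fcB u s (n-i)
      = ((fcA i r : ℝ) * (fcA (n-i) s : ℝ)) * u^n := by
    intro i hi
    have hle : i ≤ n := Nat.lt_succ_iff.mp (Finset.mem_range.mp hi)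
    have : u^i * u^(n-i) = u^n := by
      rw [← pow_add]; congr 1; omega
    simp only [fcB]; rw [mul_mul_mul_comm, this]
  rw [Finset.sum_congr rfl this, ← Finset.sum_mul, fcB]
  congr 1
  rw [← fcA_conv n s r]
  push_cast
  ring

lemma norm_summable_fcB {u : ℝ} {r : ℕ} (h : Summable (fcB u r)) (hu0 : 0 ≤ u) :
    Summable (fun n => ‖fcB u r n‖) := by
  refine h.congr (fun n => ?_)
  rw [Real.norm_eq_abs, abs_of_nonneg]
  exact mul_nonneg (Nat.cast_nonneg _) (by positivity)

lemma fcB_mul {u : ℝ} {r s : ℕ} (hr : Summable (fcB u r)) (hs : Summable (fcB u s))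
    (hu0 : 0 ≤ u) :
    Summable (fcB u (r+s)) ∧ (∑' n, fcB u r n) * (∑' n, fcB u s n) = ∑' n, fcB u (r+s) n := by
  have hr' := norm_summable_fcB hr hu0
  have hs' := norm_summable_fcB hs hu0
  have h1 : Summable (fun n => ∑ k ∈ Finset.range (n+1), fcB u r k * fcB u s (n-k)) :=
    Summable.of_norm (summable_norm_sum_mul_range_of_summable_norm hr' hs')
  constructor
  · exact h1.congr (fun n => fcB_conv r s n)
  · rw [tsum_mul_tsum_eq_tsum_sum_range_of_summable_norm hr' hs']
    exact tsum_congr (fun n => fcB_conv r s n)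

theorem quartic_root_hypergeometric (t : ℝ) (ht0 : 0 < t)
    (ht1 : t < 3 / (4 * (4 : ℝ) ^ ((1 : ℝ)/3))) :
    Summable (quarticTerm t) ∧
    (t * ∑' k : ℕ, quarticTerm t k) ^ 4 - (t * ∑' k : ℕ, quarticTerm t k) + t = 0 := by
  set u : ℝ := t^3 with hu
  have hc : (0:ℝ) < (4 : ℝ) ^ ((1 : ℝ)/3) := Real.rpow_pos_of_pos (by norm_num) _
  have hc3 : ((4 : ℝ) ^ ((1 : ℝ)/3))^(3:ℕ) = 4 := by
    rw [← Real.rpow_natCast ((4:ℝ) ^ ((1:ℝ)/3)) 3, ← Real.rpow_mul (by norm_num)]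
    norm_num
  have hu0 : 0 < u := by positivity
  have hu1 : u < 27/256 := by
    have h1 : t^3 < (3 / (4 * (4 : ℝ) ^ ((1 : ℝ)/3)))^3 := by
      exact pow_lt_pow_left₀ ht1 ht0.le (by norm_num)
    have h2 : (3 / (4 * (4 : ℝ) ^ ((1 : ℝ)/3)))^3 = 27/256 := by
      rw [div_pow, mul_pow, hc3]
      norm_num
    rw [hu]; rw [h2] at h1; exact h1
  have hs1 : Summable (fcB u 1) := summable_fcB1 hu0 hu1
  have hqt : ∀ k, quarticTerm t k = fcB u 1 k := fun k => quarticTerm_eq t k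
  have hsum : Summable (quarticTerm t) := hs1.congr (fun k => (hqt k).symm)
  refine ⟨hsum, ?_⟩
  have hS : (∑' k : ℕ, quarticTerm t k) = ∑' n, fcB u 1 n := tsum_congr hqt
  have m2 := fcB_mul hs1 hs1 hu0.le
  have hs2 : Summable (fcB u 2) := by
    have := m2.1; rwa [show (1+1 : ℕ) = 2 from rfl] at this
  have e2 : (∑' n, fcB u 1 n) * (∑' n, fcB u 1 n) = ∑' n, fcB u 2 n := by
    have := m2.2; rwa [show (1+1 : ℕ) = 2 from rfl] at this
  have m3 := fcB_mul hs1 hs2 hu0.le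
  have hs3 : Summable (fcB u 3) := by
    have := m3.1; rwa [show (1+2 : ℕ) = 3 from rfl] at this
  have e3 : (∑' n, fcB u 1 n) * (∑' n, fcB u 2 n) = ∑' n, fcB u 3 n := by
    have := m3.2; rwa [show (1+2 : ℕ) = 3 from rfl] at this
  have m4 := fcB_mul hs1 hs3 hu0.le
  have e4 : (∑' n, fcB u 1 n) * (∑' n, fcB u 3 n) = ∑' n, fcB u 4 n := by
    have := m4.2; rwa [show (1+3 : ℕ) = 4 from rfl] at this
  set G1 := ∑' n, fcB u 1 n
  set G4 := ∑' n, fcB u 4 n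
  have h4 : G1 * G1 * G1 * G1 = G4 := by
    rw [show G1 * G1 * G1 * G1 = G1 * (G1 * (G1 * G1)) from by ring, e2, e3, e4]
  have hpeel : G1 = 1 + u * G4 := by
    have h0 : G1 = fcB u 1 0 + ∑' n, fcB u 1 (n+1) := Summable.tsum_eq_zero_add hs1
    have hterm : ∀ n, fcB u 1 (n+1) = u * fcB u 4 n := by
      intro n
      simp only [fcB, fcA_succ_one, pow_succ]
      ring
    rw [h0, tsum_congr hterm, tsum_mul_left,
      show fcB u 1 0 = 1 from by simp [fcB]]
  rw [hS]
  linear_combination (t^4) * h4 - t * hpeel
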